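/- Let 1 < p < ∞, p ≠ 4, η_p = (4-p)/(4(1-p)), u(x) = (x1²+x2²)²+16x3², and ζ = u^(η_p). Then Δ_p ζ = 0 on ℝ³ \ {0}, where Δ_p ζ = X1(‖∇₀ζ‖^(p-2) X1ζ) + X2(‖∇₀ζ‖^(p-2) X2ζ). -/

import Mathlib

noncomputable section

abbrev P3 : Type := ℝ × ℝ × ℝ

/-- Heisenberg vector field X1 = ∂/∂x1 - (x2/2) ∂/∂x3 (real-valued functions). -/
def X1r (u : P3 → ℝ) (p : P3) : ℝ :=
  fderiv ℝ u p (1, 0, 0) - p.2.1 / 2 * fderiv ℝ u p (0, 0, 1)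

/-- Heisenberg vector field X2 = ∂/∂x2 + (x1/2) ∂/∂x3 (real-valued functions). -/
def X2r (u : P3 → ℝ) (p : P3) : ℝ :=
  fderiv ℝ u p (0, 1, 0) + p.1 / 2 * fderiv ℝ u p (0, 0, 1)

def uR (p : P3) : ℝ := (p.1 ^ 2 + p.2.1 ^ 2) ^ 2 + 16 * p.2.2 ^ 2

def zetaH (p : ℝ) (q : P3) : ℝ := uR q ^ ((4 - p) / (4 * (1 - p)))

/-- The Heisenberg p-Laplacian for real-valued functions. -/
def DeltaPHr (p : ℝ) (ζ : P3 → ℝ) (q : P3) : ℝ :=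
  X1r (fun r => Real.sqrt ((X1r ζ r) ^ 2 + (X2r ζ r) ^ 2) ^ (p - 2) * X1r ζ r) q +
  X2r (fun r => Real.sqrt ((X1r ζ r) ^ 2 + (X2r ζ r) ^ 2) ^ (p - 2) * X2r ζ r) q

open Real Filter Asymptotics Topology

namespace Heis

def etaP (p : ℝ) : ℝ := (4 - p) / (4 * (1 - p))
def rho (r : P3) : ℝ := r.1 ^ 2 + r.2.1 ^ 2
def Af (r : P3) : ℝ := 4 * r.1 * rho r - 16 * r.2.1 * r.2.2
def Bf (r : P3) : ℝ := 4 * r.2.1 * rho r + 16 * r.1 * r.2.2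

def e1 : P3 →L[ℝ] ℝ := ContinuousLinearMap.fst ℝ ℝ (ℝ × ℝ)
def e2 : P3 →L[ℝ] ℝ := (ContinuousLinearMap.fst ℝ ℝ ℝ).comp (ContinuousLinearMap.snd ℝ ℝ (ℝ × ℝ))
def e3 : P3 →L[ℝ] ℝ := (ContinuousLinearMap.snd ℝ ℝ ℝ).comp (ContinuousLinearMap.snd ℝ ℝ (ℝ × ℝ))

@[simp] lemma e1_apply (v : P3) : e1 v = v.1 := rfl
@[simp] lemma e2_apply (v : P3) : e2 v = v.2.1 := rfl
@[simp] lemma e3_apply (v : P3) : e3 v = v.2.2 := rfl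

def Drho (r : P3) : P3 →L[ℝ] ℝ := (2*r.1) • e1 + (2*r.2.1) • e2
def DuR (r : P3) : P3 →L[ℝ] ℝ := (4*r.1*rho r) • e1 + (4*r.2.1*rho r) • e2 + (32*r.2.2) • e3
def DA (r : P3) : P3 →L[ℝ] ℝ :=
  (4*rho r + 8*r.1^2) • e1 + (8*r.1*r.2.1 - 16*r.2.2) • e2 + (-(16*r.2.1)) • e3
def DB (r : P3) : P3 →L[ℝ] ℝ :=
  (8*r.1*r.2.1 + 16*r.2.2) • e1 + (4*rho r + 8*r.2.1^2) • e2 + (16*r.1) • e3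

lemma hasFDerivAt_x (r : P3) : HasFDerivAt (fun s : P3 => s.1) e1 r := hasFDerivAt_fst
lemma hasFDerivAt_y (r : P3) : HasFDerivAt (fun s : P3 => s.2.1) e2 r :=
  hasFDerivAt_fst.comp r hasFDerivAt_snd
lemma hasFDerivAt_z (r : P3) : HasFDerivAt (fun s : P3 => s.2.2) e3 r :=
  hasFDerivAt_snd.comp r hasFDerivAt_snd

lemma hasFDerivAt_clm_congr {f g : P3 → ℝ} {D D' : P3 →L[ℝ] ℝ} {x : P3}
    (h : HasFDerivAt f D x) (hfg : ∀ s, g s = f s) (hD : ∀ v, D' v = D v) :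
    HasFDerivAt g D' x := by
  have h1 : D' = D := ContinuousLinearMap.ext hD
  have h2 : g = f := funext hfg
  rw [h1, h2]; exact h

lemma hasFDerivAt_rho (r : P3) : HasFDerivAt rho (Drho r) r := by
  refine hasFDerivAt_clm_congr (((hasFDerivAt_x r).mul (hasFDerivAt_x r)).add
    ((hasFDerivAt_y r).mul (hasFDerivAt_y r))) (fun s => by simp [rho]; ring) (fun v => ?_)
  simp [Drho]
  ring

lemma hasFDerivAt_uR (r : P3) : HasFDerivAt uR (DuR r) r := by
  refine hasFDerivAt_clm_congr (((hasFDerivAt_rho r).mul (hasFDerivAt_rho r)).add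
    (((hasFDerivAt_z r).mul (hasFDerivAt_z r)).const_mul 16)) (fun s => by simp [uR, rho]; ring)
    (fun v => ?_)
  simp [DuR, Drho, rho]
  ring

lemma hasFDerivAt_Af (r : P3) : HasFDerivAt Af (DA r) r := by
  refine hasFDerivAt_clm_congr ((((hasFDerivAt_x r).const_mul 4).mul (hasFDerivAt_rho r)).sub
    ((((hasFDerivAt_y r).const_mul 16).mul (hasFDerivAt_z r)))) (fun s => rfl)
    (fun v => ?_)
  simp [DA, Drho, rho]
  ring

lemma hasFDerivAt_Bf (r : P3) : HasFDerivAt Bf (DB r) r := by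
  refine hasFDerivAt_clm_congr ((((hasFDerivAt_y r).const_mul 4).mul (hasFDerivAt_rho r)).add
    ((((hasFDerivAt_x r).const_mul 16).mul (hasFDerivAt_z r)))) (fun s => rfl)
    (fun v => ?_)
  simp [DB, Drho, rho]
  ring

lemma rho_nonneg (r : P3) : 0 ≤ rho r := by simp [rho]; positivity

lemma uR_eq (r : P3) : uR r = rho r ^ 2 + 16 * r.2.2 ^ 2 := by simp [uR, rho]

lemma uR_pos {r : P3} (hr : r ≠ 0) : 0 < uR r := by
  have h : r.1 ≠ 0 ∨ r.2.1 ≠ 0 ∨ r.2.2 ≠ 0 := by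
    by_contra h
    push_neg at h
    exact hr (Prod.ext h.1 (Prod.ext h.2.1 h.2.2))
  have h1 : (0:ℝ) ≤ (r.1 ^ 2 + r.2.1 ^ 2) ^ 2 := by positivity
  rcases h with h | h | h
  · have : 0 < r.1 ^ 2 := by positivity
    rw [uR]; nlinarith [sq_nonneg r.2.1, sq_nonneg r.2.2, sq_nonneg (r.1^2 + r.2.1^2)]
  · have : 0 < r.2.1 ^ 2 := by positivity
    rw [uR]; nlinarith [sq_nonneg r.1, sq_nonneg r.2.2, sq_nonneg (r.1^2 + r.2.1^2)]
  · have : 0 < r.2.2 ^ 2 := by positivity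
    rw [uR]; nlinarith

lemma X1r_eq {f : P3 → ℝ} {D : P3 →L[ℝ] ℝ} {x : P3} (h : HasFDerivAt f D x) :
    X1r f x = D (1,0,0) - x.2.1/2 * D (0,0,1) := by rw [X1r, h.fderiv]

lemma X2r_eq {f : P3 → ℝ} {D : P3 →L[ℝ] ℝ} {x : P3} (h : HasFDerivAt f D x) :
    X2r f x = D (0,1,0) + x.1/2 * D (0,0,1) := by rw [X2r, h.fderiv]

lemma hasFDerivAt_zeta (p : ℝ) {r : P3} (hr : r ≠ 0) :
    HasFDerivAt (zetaH p) ((etaP p * uR r ^ (etaP p - 1)) • DuR r) r :=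
  (hasFDerivAt_uR r).rpow_const (Or.inl (uR_pos hr).ne')

lemma X1_zeta (p : ℝ) {r : P3} (hr : r ≠ 0) :
    X1r (zetaH p) r = etaP p * uR r ^ (etaP p - 1) * Af r := by
  rw [X1r_eq (hasFDerivAt_zeta p hr)]
  simp [DuR, Af, rho]
  ring

lemma X2_zeta (p : ℝ) {r : P3} (hr : r ≠ 0) :
    X2r (zetaH p) r = etaP p * uR r ^ (etaP p - 1) * Bf r := by
  rw [X2r_eq (hasFDerivAt_zeta p hr)]
  simp [DuR, Bf, rho]
  ring



def cP (p : ℝ) : ℝ := etaP p * (4 * |etaP p|) ^ (p - 2)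
def F1 (p : ℝ) (r : P3) : ℝ := cP p * (rho r ^ ((p-2)/2) * (uR r ^ (-((p+4)/4)) * Af r))
def F2 (p : ℝ) (r : P3) : ℝ := cP p * (rho r ^ ((p-2)/2) * (uR r ^ (-((p+4)/4)) * Bf r))

lemma grad_norm (p : ℝ) {r : P3} (hr : r ≠ 0) :
    Real.sqrt ((X1r (zetaH p) r)^2 + (X2r (zetaH p) r)^2)
      = |etaP p| * uR r ^ (etaP p - 1) * (4 * Real.sqrt (rho r) * Real.sqrt (uR r)) := by
  rw [X1_zeta p hr, X2_zeta p hr]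
  have hAB : Af r ^ 2 + Bf r ^ 2 = 16 * rho r * uR r := by
    simp only [Af, Bf, rho, uR]; ring
  have e1 : Real.sqrt (rho r) ^ 2 = rho r := Real.sq_sqrt (rho_nonneg r)
  have e2 : Real.sqrt (uR r) ^ 2 = uR r := Real.sq_sqrt (uR_pos hr).le
  have e3 : |etaP p| ^ 2 = etaP p ^ 2 := sq_abs _
  have hS : 0 ≤ |etaP p| * uR r ^ (etaP p - 1) * (4 * Real.sqrt (rho r) * Real.sqrt (uR r)) := by
    have h0 : (0:ℝ) ≤ uR r ^ (etaP p - 1) := Real.rpow_nonneg (uR_pos hr).le _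
    have h4 : (0:ℝ) ≤ 4 * Real.sqrt (rho r) * Real.sqrt (uR r) := by positivity
    exact mul_nonneg (mul_nonneg (abs_nonneg _) h0) h4
  have key : (etaP p * uR r ^ (etaP p - 1) * Af r)^2 + (etaP p * uR r ^ (etaP p - 1) * Bf r)^2
      = (|etaP p| * uR r ^ (etaP p - 1) * (4 * Real.sqrt (rho r) * Real.sqrt (uR r)))^2 := by
    have expand : (|etaP p| * uR r ^ (etaP p - 1) * (4 * Real.sqrt (rho r) * Real.sqrt (uR r)))^2
        = |etaP p|^2 * (uR r ^ (etaP p - 1))^2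
          * (16 * (Real.sqrt (rho r)^2) * (Real.sqrt (uR r)^2)) := by ring
    rw [expand, e1, e2, e3]
    calc (etaP p * uR r ^ (etaP p - 1) * Af r)^2 + (etaP p * uR r ^ (etaP p - 1) * Bf r)^2
        = etaP p^2 * (uR r ^ (etaP p - 1))^2 * (Af r^2 + Bf r^2) := by ring
      _ = _ := by rw [hAB]
  rw [key, Real.sqrt_sq hS]

lemma power_split (p : ℝ) (hp1 : 1 < p) {r : P3} (hr : r ≠ 0) :
    uR r ^ (-((p+4)/4))
      = uR r ^ ((etaP p - 1)*(p-2)) * uR r ^ ((1/2)*(p-2)) * uR r ^ (etaP p - 1) := by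
  have hu := uR_pos hr
  rw [← Real.rpow_add hu, ← Real.rpow_add hu]
  congr 1
  have h1 : (1:ℝ) - p ≠ 0 := by linarith
  simp only [etaP]
  field_simp
  ring

lemma inner1_eq (p : ℝ) (hp1 : 1 < p) {r : P3} (hr : r ≠ 0) :
    Real.sqrt ((X1r (zetaH p) r)^2 + (X2r (zetaH p) r)^2) ^ (p-2) * X1r (zetaH p) r
      = F1 p r := by
  rw [grad_norm p hr, X1_zeta p hr]
  have hu := uR_pos hr
  have hρ := rho_nonneg r
  have h1 : (|etaP p| * uR r ^ (etaP p - 1) * (4 * Real.sqrt (rho r) * Real.sqrt (uR r))) ^ (p-2)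
      = |etaP p|^(p-2) * (uR r ^ (etaP p - 1))^(p-2)
        * ((4:ℝ)^(p-2) * Real.sqrt (rho r)^(p-2) * Real.sqrt (uR r)^(p-2)) := by
    rw [Real.mul_rpow (by positivity) (by positivity),
        Real.mul_rpow (by positivity) (by positivity),
        Real.mul_rpow (by positivity) (by positivity),
        Real.mul_rpow (by positivity) (by positivity)]
  rw [h1, Real.sqrt_eq_rpow (rho r), Real.sqrt_eq_rpow (uR r),
      ← Real.rpow_mul hρ, ← Real.rpow_mul hu.le, ← Real.rpow_mul hu.le]
  simp only [F1, cP]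
  rw [power_split p hp1 hr,
      Real.mul_rpow (by norm_num : (0:ℝ) ≤ 4) (abs_nonneg (etaP p)),
      show (p-2)/2 = (1/2)*(p-2) by ring]
  ring

lemma inner2_eq (p : ℝ) (hp1 : 1 < p) {r : P3} (hr : r ≠ 0) :
    Real.sqrt ((X1r (zetaH p) r)^2 + (X2r (zetaH p) r)^2) ^ (p-2) * X2r (zetaH p) r
      = F2 p r := by
  rw [grad_norm p hr, X2_zeta p hr]
  have hu := uR_pos hr
  have hρ := rho_nonneg r
  have h1 : (|etaP p| * uR r ^ (etaP p - 1) * (4 * Real.sqrt (rho r) * Real.sqrt (uR r))) ^ (p-2)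
      = |etaP p|^(p-2) * (uR r ^ (etaP p - 1))^(p-2)
        * ((4:ℝ)^(p-2) * Real.sqrt (rho r)^(p-2) * Real.sqrt (uR r)^(p-2)) := by
    rw [Real.mul_rpow (by positivity) (by positivity),
        Real.mul_rpow (by positivity) (by positivity),
        Real.mul_rpow (by positivity) (by positivity),
        Real.mul_rpow (by positivity) (by positivity)]
  rw [h1, Real.sqrt_eq_rpow (rho r), Real.sqrt_eq_rpow (uR r),
      ← Real.rpow_mul hρ, ← Real.rpow_mul hu.le, ← Real.rpow_mul hu.le]
  simp only [F2, cP]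
  rw [power_split p hp1 hr,
      Real.mul_rpow (by norm_num : (0:ℝ) ≤ 4) (abs_nonneg (etaP p)),
      show (p-2)/2 = (1/2)*(p-2) by ring]
  ring



lemma div_offaxis (p : ℝ) (hp1 : 1 < p) {q : P3} (hq : q ≠ 0) (hρ : rho q ≠ 0) :
    X1r (F1 p) q + X2r (F2 p) q = 0 := by
  have hu := uR_pos hq
  have hρα := (hasFDerivAt_rho q).rpow_const (p := (p-2)/2) (Or.inl hρ)
  have huβ := (hasFDerivAt_uR q).rpow_const (p := -((p+4)/4)) (Or.inl hu.ne')
  have h1 : HasFDerivAt (F1 p) _ q := (hρα.mul (huβ.mul (hasFDerivAt_Af q))).const_mul (cP p)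
  have h2 : HasFDerivAt (F2 p) _ q := (hρα.mul (huβ.mul (hasFDerivAt_Bf q))).const_mul (cP p)
  rw [X1r_eq h1, X2r_eq h2]
  simp only [ContinuousLinearMap.add_apply, ContinuousLinearMap.smul_apply,
    ContinuousLinearMap.coe_smul', Pi.smul_apply, e1_apply, e2_apply, e3_apply, smul_eq_mul,
    Drho, DuR, DA, DB, Pi.mul_apply]
  rw [Real.rpow_sub_one hρ, Real.rpow_sub_one hu.ne']
  simp only [Af, Bf, rho, uR] at *
  field_simp
  ring

lemma uR_nonneg (r : P3) : 0 ≤ uR r := by rw [uR]; positivity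

lemma continuous_uR : Continuous uR := by unfold uR; fun_prop

lemma abs_fst_le (v : P3) : |v.1| ≤ ‖v‖ := by
  simpa [Real.norm_eq_abs] using norm_fst_le v
lemma abs_snd1_le (v : P3) : |v.2.1| ≤ ‖v‖ := by
  simpa [Real.norm_eq_abs] using (norm_fst_le v.2).trans (norm_snd_le v)
lemma abs_snd2_le (v : P3) : |v.2.2| ≤ ‖v‖ := by
  simpa [Real.norm_eq_abs] using (norm_snd_le v.2).trans (norm_snd_le v)

lemma abs_A_le (r : P3) : |Af r| ≤ Real.sqrt (rho r) * (4 * rho r + 16 * |r.2.2|) := by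
  have hx : |r.1| ≤ Real.sqrt (rho r) := by
    rw [← Real.sqrt_sq_eq_abs]
    exact Real.sqrt_le_sqrt (by simp [rho]; positivity)
  have hy : |r.2.1| ≤ Real.sqrt (rho r) := by
    rw [← Real.sqrt_sq_eq_abs]
    exact Real.sqrt_le_sqrt (by simp [rho]; nlinarith [sq_nonneg r.1])
  have hρ := rho_nonneg r
  have hs := Real.sqrt_nonneg (rho r)
  calc |Af r| ≤ |4 * r.1 * rho r| + |16 * r.2.1 * r.2.2| := by
        rw [Af]; exact abs_sub _ _
    _ = 4 * |r.1| * rho r + 16 * |r.2.1| * |r.2.2| := by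
        rw [abs_mul, abs_mul, abs_mul, abs_mul]
        simp [abs_of_nonneg hρ]
    _ ≤ 4 * Real.sqrt (rho r) * rho r + 16 * Real.sqrt (rho r) * |r.2.2| := by
        gcongr
    _ = Real.sqrt (rho r) * (4 * rho r + 16 * |r.2.2|) := by ring

lemma abs_B_le (r : P3) : |Bf r| ≤ Real.sqrt (rho r) * (4 * rho r + 16 * |r.2.2|) := by
  have hx : |r.1| ≤ Real.sqrt (rho r) := by
    rw [← Real.sqrt_sq_eq_abs]
    exact Real.sqrt_le_sqrt (by simp [rho]; positivity)
  have hy : |r.2.1| ≤ Real.sqrt (rho r) := by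
    rw [← Real.sqrt_sq_eq_abs]
    exact Real.sqrt_le_sqrt (by simp [rho]; nlinarith [sq_nonneg r.1])
  have hρ := rho_nonneg r
  have hs := Real.sqrt_nonneg (rho r)
  calc |Bf r| ≤ |4 * r.2.1 * rho r| + |16 * r.1 * r.2.2| := by
        rw [Bf]; exact abs_add_le _ _
    _ = 4 * |r.2.1| * rho r + 16 * |r.1| * |r.2.2| := by
        rw [abs_mul, abs_mul, abs_mul, abs_mul]
        simp [abs_of_nonneg hρ]
    _ ≤ 4 * Real.sqrt (rho r) * rho r + 16 * Real.sqrt (rho r) * |r.2.2| := by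
        gcongr
    _ = Real.sqrt (rho r) * (4 * rho r + 16 * |r.2.2|) := by ring

lemma hasFDerivAt_axis_zero (p : ℝ) (hp2 : 2 < p) {q : P3}
    (h1 : q.1 = 0) (h2 : q.2.1 = 0) (hq : q ≠ 0) (A' : P3 → ℝ)
    (hA' : ∀ r, |A' r| ≤ Real.sqrt (rho r) * (4 * rho r + 16 * |r.2.2|)) :
    HasFDerivAt (fun r => cP p * (rho r ^ ((p-2)/2) * (uR r ^ (-((p+4)/4)) * A' r)))
      (0 : P3 →L[ℝ] ℝ) q := by
  have hu := uR_pos hq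
  have hα : (0:ℝ) < (p-2)/2 := by linarith
  have hρq : rho q = 0 := by simp [rho, h1, h2]
  have hF0 : cP p * (rho q ^ ((p-2)/2) * (uR q ^ (-((p+4)/4)) * A' q)) = 0 := by
    rw [hρq, Real.zero_rpow hα.ne']; ring
  rw [hasFDerivAt_iff_isLittleO_nhds_zero]
  simp only [ContinuousLinearMap.zero_apply, sub_zero, hF0]
  rw [isLittleO_iff]
  intro ε hε
  set M : ℝ := uR q ^ (-((p+4)/4)) + 1 with hM
  have hMpos : 0 < M := by
    have := Real.rpow_pos_of_pos hu (-((p+4)/4))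
    rw [hM]; linarith
  set K : ℝ := 8 + 16 * (|q.2.2| + 1) with hK
  have hKpos : 0 < K := by positivity
  set C : ℝ := |cP p| * ((2:ℝ) ^ ((p-2)/2) * (M * (Real.sqrt 2 * K))) with hC
  have hCnn : 0 ≤ C := by positivity
  have Ev1 : ∀ᶠ v : P3 in 𝓝 0, ‖v‖ ≤ 1 := by
    filter_upwards [Metric.closedBall_mem_nhds (0 : P3) one_pos] with v hv
    simpa using hv
  have Ev2 : ∀ᶠ v : P3 in 𝓝 0, uR (q+v) ^ (-((p+4)/4)) ≤ M := by
    have hcu : Continuous (fun v : P3 => uR (q + v)) := by unfold uR; fun_prop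
    have hcont : ContinuousAt (fun v : P3 => uR (q+v) ^ (-((p+4)/4))) 0 :=
      hcu.continuousAt.rpow_const (Or.inl (by simpa using hu.ne'))
    have := hcont.tendsto.eventually_lt_const (show uR (q + 0) ^ (-((p+4)/4)) < M by
      simp only [add_zero]; rw [hM]; linarith)
    exact this.mono fun v hv => hv.le
  have Ev3 : ∀ᶠ v : P3 in 𝓝 0, C * ‖v‖ ^ (p-2) ≤ ε := by
    have hcont : ContinuousAt (fun v : P3 => C * ‖v‖ ^ (p-2)) 0 := by
      exact ((Real.continuousAt_rpow_const _ _ (Or.inr (by linarith : (0:ℝ) ≤ p-2))).comp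
        continuous_norm.continuousAt).const_mul C
    have hval : (fun v : P3 => C * ‖v‖ ^ (p-2)) 0 = 0 := by
      simp [Real.zero_rpow (show p-2 ≠ 0 by linarith)]
    have := hcont.tendsto.eventually_lt_const (show (fun v : P3 => C * ‖v‖ ^ (p-2)) 0 < ε by
      rw [hval]; exact hε)
    exact this.mono fun v hv => hv.le
  filter_upwards [Ev1, Ev2, Ev3] with v hv1 hv2 hv3
  have hρv : rho (q + v) = v.1 ^ 2 + v.2.1 ^ 2 := by
    simp [rho, Prod.fst_add, Prod.snd_add, h1, h2]
  have hρle : rho (q + v) ≤ 2 * ‖v‖ ^ 2 := by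
    rw [hρv]
    have a1 : v.1 ^ 2 ≤ ‖v‖ ^ 2 := by
      rw [← sq_abs]
      exact pow_le_pow_left₀ (abs_nonneg _) (abs_fst_le v) 2
    have a2 : v.2.1 ^ 2 ≤ ‖v‖ ^ 2 := by
      rw [← sq_abs]
      exact pow_le_pow_left₀ (abs_nonneg _) (abs_snd1_le v) 2
    linarith
  have hnv : (0:ℝ) ≤ ‖v‖ := norm_nonneg v
  have hsq : Real.sqrt (rho (q+v)) ≤ Real.sqrt 2 * ‖v‖ := by
    calc Real.sqrt (rho (q+v)) ≤ Real.sqrt (2 * ‖v‖^2) := Real.sqrt_le_sqrt hρle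
      _ = Real.sqrt 2 * ‖v‖ := by
          rw [Real.sqrt_mul (by norm_num), Real.sqrt_sq hnv]
  have hzb : |(q+v).2.2| ≤ |q.2.2| + 1 := by
    have : (q+v).2.2 = q.2.2 + v.2.2 := rfl
    rw [this]
    calc |q.2.2 + v.2.2| ≤ |q.2.2| + |v.2.2| := abs_add_le _ _
      _ ≤ |q.2.2| + 1 := by have := (abs_snd2_le v).trans hv1; linarith
  have hA'b : |A' (q+v)| ≤ Real.sqrt 2 * ‖v‖ * K := by
    have t2 : 4 * rho (q+v) + 16 * |(q+v).2.2| ≤ K := by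
      have hv2' : ‖v‖ ^ 2 ≤ 1 := by nlinarith
      rw [hK]; linarith
    have t2nn : 0 ≤ 4 * rho (q+v) + 16 * |(q+v).2.2| := by
      have := rho_nonneg (q+v)
      have := abs_nonneg ((q+v).2.2)
      linarith
    have snn : 0 ≤ Real.sqrt 2 * ‖v‖ := by positivity
    exact (hA' _).trans (mul_le_mul hsq t2 t2nn snn)
  have hρα : rho (q+v) ^ ((p-2)/2) ≤ (2:ℝ)^((p-2)/2) * ‖v‖^(p-2) := by
    calc rho (q+v) ^ ((p-2)/2) ≤ (2 * ‖v‖^2) ^ ((p-2)/2) :=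
          Real.rpow_le_rpow (rho_nonneg _) hρle hα.le
      _ = (2:ℝ)^((p-2)/2) * (‖v‖^2) ^ ((p-2)/2) := Real.mul_rpow (by norm_num) (by positivity)
      _ = (2:ℝ)^((p-2)/2) * ‖v‖^(p-2) := by
          rw [← Real.rpow_natCast ‖v‖ 2, ← Real.rpow_mul hnv,
            show ((2:ℕ):ℝ) * ((p-2)/2) = p-2 by push_cast; ring]
  have hunn : (0:ℝ) ≤ uR (q+v) ^ (-((p+4)/4)) := Real.rpow_nonneg (uR_nonneg _) _
  have key : ‖cP p * (rho (q+v) ^ ((p-2)/2) * (uR (q+v) ^ (-((p+4)/4)) * A' (q+v)))‖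
      ≤ C * ‖v‖^(p-2) * ‖v‖ := by
    have e : ‖cP p * (rho (q+v) ^ ((p-2)/2) * (uR (q+v) ^ (-((p+4)/4)) * A' (q+v)))‖
        = |cP p| * (rho (q+v) ^ ((p-2)/2) * (uR (q+v) ^ (-((p+4)/4)) * |A' (q+v)|)) := by
      rw [Real.norm_eq_abs, abs_mul, abs_mul, abs_mul,
        abs_of_nonneg (Real.rpow_nonneg (rho_nonneg _) _), abs_of_nonneg hunn]
    rw [e]
    have m1 : uR (q+v) ^ (-((p+4)/4)) * |A' (q+v)| ≤ M * (Real.sqrt 2 * ‖v‖ * K) :=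
      mul_le_mul hv2 hA'b (abs_nonneg _) hMpos.le
    have m2 : rho (q+v) ^ ((p-2)/2) * (uR (q+v) ^ (-((p+4)/4)) * |A' (q+v)|)
        ≤ ((2:ℝ)^((p-2)/2) * ‖v‖^(p-2)) * (M * (Real.sqrt 2 * ‖v‖ * K)) := by
      refine mul_le_mul hρα m1 (mul_nonneg hunn (abs_nonneg _)) ?_
      positivity
    calc |cP p| * (rho (q+v) ^ ((p-2)/2) * (uR (q+v) ^ (-((p+4)/4)) * |A' (q+v)|))
        ≤ |cP p| * (((2:ℝ)^((p-2)/2) * ‖v‖^(p-2)) * (M * (Real.sqrt 2 * ‖v‖ * K))) :=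
          mul_le_mul_of_nonneg_left m2 (abs_nonneg _)
      _ = C * ‖v‖^(p-2) * ‖v‖ := by rw [hC]; ring
  calc ‖cP p * (rho (q+v) ^ ((p-2)/2) * (uR (q+v) ^ (-((p+4)/4)) * A' (q+v)))‖
      ≤ C * ‖v‖^(p-2) * ‖v‖ := key
    _ ≤ ε * ‖v‖ := by
        have : C * ‖v‖^(p-2) ≤ ε := hv3
        nlinarith [Real.rpow_nonneg hnv (p-2)]

lemma notdiff_core (c k : ℝ) (hc : c ≠ 0) (hk : k ≠ 0) (α : ℝ) (hα : α < 0)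
    (W : ℝ → ℝ) (hW : ContinuousAt W 0) (hW0 : 0 < W 0) :
    ¬ DifferentiableAt ℝ (fun s : ℝ => c * ((s ^ 2 : ℝ) ^ α * (W s * (k * s)))) 0 := by
  intro hd
  set h : ℝ → ℝ := fun s => c * ((s ^ 2 : ℝ) ^ α * (W s * (k * s))) with hh
  have h0 : h 0 = 0 := by simp [hh]
  have hder := hd.hasDerivAt
  rw [hasDerivAt_iff_tendsto_slope] at hder
  have T1 : Tendsto (fun s : ℝ => |s| ^ (2 * α)) (𝓝[≠] (0:ℝ)) atTop := by
    have hpos : (0:ℝ) < -(2 * α) := by linarith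
    have base : Tendsto (fun s : ℝ => |s| ^ (-(2 * α))) (𝓝[≠] (0:ℝ)) (𝓝[>] (0:ℝ)) := by
      rw [tendsto_nhdsWithin_iff]
      constructor
      · have hcont : ContinuousAt (fun s : ℝ => |s| ^ (-(2 * α))) 0 :=
          (Real.continuousAt_rpow_const _ _ (Or.inr hpos.le)).comp
            continuous_abs.continuousAt
        have := hcont.tendsto.mono_left (nhdsWithin_le_nhds (s := {(0:ℝ)}ᶜ))
        simpa [Real.zero_rpow hpos.ne'] using this
      · filter_upwards [self_mem_nhdsWithin] with s hs
        exact Real.rpow_pos_of_pos (abs_pos.2 hs) _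
    have := tendsto_inv_nhdsGT_zero.comp base
    refine this.congr fun s => ?_
    simp only [Function.comp]
    rw [← Real.rpow_neg (abs_nonneg s), neg_neg]
  have hlim : (0:ℝ) < |c| * |k| * |W 0| := by
    have := abs_pos.2 hc
    have := abs_pos.2 hk
    have := abs_pos.2 hW0.ne'
    positivity
  have T2 : Tendsto (fun s : ℝ => |c| * |k| * |W s|) (𝓝[≠] (0:ℝ)) (𝓝 (|c| * |k| * |W 0|)) :=
    (hW.abs.tendsto.const_mul (|c| * |k|)).mono_left nhdsWithin_le_nhds
  have Tprod : Tendsto (fun s : ℝ => |s| ^ (2*α) * (|c| * |k| * |W s|)) (𝓝[≠] (0:ℝ)) atTop :=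
    T1.atTop_mul_pos hlim T2
  have Tslope : Tendsto (fun s : ℝ => |slope h 0 s|) (𝓝[≠] (0:ℝ)) atTop := by
    refine Tprod.congr' ?_
    filter_upwards [self_mem_nhdsWithin] with s hs
    have hsl : slope h 0 s = h s / s := by simp [slope_def_field, h0]
    have e : (s ^ 2 : ℝ) ^ α = |s| ^ (2*α) := by
      rw [← sq_abs, ← Real.rpow_natCast |s| 2, ← Real.rpow_mul (abs_nonneg s)]
      norm_num
    have habs : |h s| = |c| * ((s ^ 2 : ℝ) ^ α * (|W s| * (|k| * |s|))) := by
      simp [hh, abs_mul, abs_of_nonneg (Real.rpow_nonneg (sq_nonneg s) α)]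
    rw [hsl, abs_div, habs, e]
    have hs' : |s| ≠ 0 := abs_ne_zero.2 hs
    field_simp
  exact not_tendsto_atTop_of_tendsto_nhds hder.abs Tslope

lemma rho_mk (x y z : ℝ) : rho (x,y,z) = x^2 + y^2 := rfl
lemma Af_mk (x y z : ℝ) : Af (x,y,z) = 4*x*(x^2+y^2) - 16*y*z := rfl
lemma Bf_mk (x y z : ℝ) : Bf (x,y,z) = 4*y*(x^2+y^2) + 16*x*z := rfl

lemma etaP_ne {p : ℝ} (hp1 : 1 < p) (hp4 : p ≠ 4) : etaP p ≠ 0 := by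
  apply div_ne_zero
  · exact sub_ne_zero.2 (Ne.symm hp4)
  · intro h
    have : (1:ℝ) - p = 0 := by linarith [mul_eq_zero.1 h |>.resolve_left (by norm_num)]
    linarith

lemma cP_ne {p : ℝ} (hp1 : 1 < p) (hp4 : p ≠ 4) : cP p ≠ 0 := by
  have h := etaP_ne hp1 hp4
  have : (0:ℝ) < 4 * |etaP p| := by
    have := abs_pos.2 h
    linarith
  exact mul_ne_zero h (Real.rpow_pos_of_pos this _).ne'

lemma div_axis_p2 {q : P3} (hq : q ≠ 0) (h1 : q.1 = 0) (h2 : q.2.1 = 0) :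
    X1r (F1 2) q + X2r (F2 2) q = 0 := by
  have hu := uR_pos hq
  have hρ0 : HasFDerivAt (fun r : P3 => rho r ^ (((2:ℝ)-2)/2)) (0 : P3 →L[ℝ] ℝ) q := by
    have e : (fun r : P3 => rho r ^ (((2:ℝ)-2)/2)) = fun _ => (1:ℝ) := by
      funext s; norm_num
    rw [e]; exact hasFDerivAt_const 1 q
  have huβ := (hasFDerivAt_uR q).rpow_const (p := -(((2:ℝ)+4)/4)) (Or.inl hu.ne')
  have hd1 : HasFDerivAt (F1 2) _ q := (hρ0.mul (huβ.mul (hasFDerivAt_Af q))).const_mul (cP 2)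
  have hd2 : HasFDerivAt (F2 2) _ q := (hρ0.mul (huβ.mul (hasFDerivAt_Bf q))).const_mul (cP 2)
  rw [X1r_eq hd1, X2r_eq hd2]
  simp only [ContinuousLinearMap.add_apply, ContinuousLinearMap.smul_apply,
    ContinuousLinearMap.zero_apply, e1_apply, e2_apply, e3_apply, smul_eq_mul, DuR, DA, DB]
  simp [Af, Bf, rho, h1, h2]

lemma notdiff_F1 {p : ℝ} (hp1 : 1 < p) (hp2 : p < 2) {q : P3}
    (h1 : q.1 = 0) (h2 : q.2.1 = 0) (hz : q.2.2 ≠ 0) :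
    ¬ DifferentiableAt ℝ (F1 p) q := by
  intro hd
  have hq : q ≠ 0 := by
    intro h; rw [h] at hz; exact hz rfl
  have hu := uR_pos hq
  have hq0 : ((0:ℝ), (0:ℝ), q.2.2) = q := by
    refine Prod.ext h1.symm (Prod.ext h2.symm rfl)
  have hφ : DifferentiableAt ℝ (fun s : ℝ => (((0:ℝ), s, q.2.2) : P3)) 0 :=
    (differentiableAt_const _).prodMk (differentiableAt_id.prodMk (differentiableAt_const _))
  have hcomp : DifferentiableAt ℝ (fun s : ℝ => F1 p ((0:ℝ), s, q.2.2)) 0 := by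
    have hdq : DifferentiableAt ℝ (F1 p) (((0:ℝ), (0:ℝ), q.2.2) : P3) := by
      rw [hq0]; exact hd
    exact DifferentiableAt.comp (g := F1 p) 0 hdq hφ
  set W : ℝ → ℝ := fun s => uR ((0:ℝ), s, q.2.2) ^ (-((p+4)/4)) with hW
  have hfun : (fun s : ℝ => F1 p ((0:ℝ), s, q.2.2))
      = fun s : ℝ => cP p * ((s^2:ℝ)^((p-2)/2) * (W s * ((-16*q.2.2) * s))) := by
    funext s
    simp only [F1, rho_mk, Af_mk, hW]
    rw [show ((0:ℝ)^2 + s^2 : ℝ) = s^2 from by norm_num]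
    ring
  rw [hfun] at hcomp
  have hWc : ContinuousAt W 0 := by
    have hcu : Continuous (fun s : ℝ => uR ((0:ℝ), s, q.2.2)) := by unfold uR; fun_prop
    exact hcu.continuousAt.rpow_const (Or.inl (by rw [hq0]; exact hu.ne'))
  have hW0 : 0 < W 0 := Real.rpow_pos_of_pos (by rw [hq0]; exact hu) _
  exact notdiff_core (cP p) (-16*q.2.2) (cP_ne hp1 (by linarith)) (by simpa using hz)
    ((p-2)/2) (by linarith) W hWc hW0 hcomp

lemma notdiff_F2 {p : ℝ} (hp1 : 1 < p) (hp2 : p < 2) {q : P3}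
    (h1 : q.1 = 0) (h2 : q.2.1 = 0) (hz : q.2.2 ≠ 0) :
    ¬ DifferentiableAt ℝ (F2 p) q := by
  intro hd
  have hq : q ≠ 0 := by
    intro h; rw [h] at hz; exact hz rfl
  have hu := uR_pos hq
  have hq0 : ((0:ℝ), (0:ℝ), q.2.2) = q := by
    refine Prod.ext h1.symm (Prod.ext h2.symm rfl)
  have hφ : DifferentiableAt ℝ (fun s : ℝ => ((s, (0:ℝ), q.2.2) : P3)) 0 :=
    differentiableAt_id.prodMk ((differentiableAt_const _).prodMk (differentiableAt_const _))
  have hcomp : DifferentiableAt ℝ (fun s : ℝ => F2 p (s, (0:ℝ), q.2.2)) 0 := by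
    have hdq : DifferentiableAt ℝ (F2 p) (((0:ℝ), (0:ℝ), q.2.2) : P3) := by
      rw [hq0]; exact hd
    exact DifferentiableAt.comp (g := F2 p) 0 hdq hφ
  set W : ℝ → ℝ := fun s => uR (s, (0:ℝ), q.2.2) ^ (-((p+4)/4)) with hW
  have hfun : (fun s : ℝ => F2 p (s, (0:ℝ), q.2.2))
      = fun s : ℝ => cP p * ((s^2:ℝ)^((p-2)/2) * (W s * ((16*q.2.2) * s))) := by
    funext s
    simp only [F2, rho_mk, Bf_mk, hW]
    rw [show (s^2 + (0:ℝ)^2 : ℝ) = s^2 from by norm_num]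
    ring
  rw [hfun] at hcomp
  have hWc : ContinuousAt W 0 := by
    have hcu : Continuous (fun s : ℝ => uR (s, (0:ℝ), q.2.2)) := by unfold uR; fun_prop
    exact hcu.continuousAt.rpow_const (Or.inl (by rw [hq0]; exact hu.ne'))
  have hW0 : 0 < W 0 := Real.rpow_pos_of_pos (by rw [hq0]; exact hu) _
  exact notdiff_core (cP p) (16*q.2.2) (cP_ne hp1 (by linarith)) (by simpa using hz)
    ((p-2)/2) (by linarith) W hWc hW0 hcomp

lemma X1r_congr {f g : P3 → ℝ} {x : P3} (h : f =ᶠ[𝓝 x] g) : X1r f x = X1r g x := by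
  rw [X1r, X1r, h.fderiv_eq]

lemma X2r_congr {f g : P3 → ℝ} {x : P3} (h : f =ᶠ[𝓝 x] g) : X2r f x = X2r g x := by
  rw [X2r, X2r, h.fderiv_eq]

end Heis

open Heis

theorem heisenberg_p_harmonic (p : ℝ) (hp1 : 1 < p) (hp4 : p ≠ 4)
    (q : P3) (hq : q ≠ 0) :
    DeltaPHr p (zetaH p) q = 0 := by
  have hev1 : (fun r => Real.sqrt ((X1r (zetaH p) r)^2 + (X2r (zetaH p) r)^2) ^ (p-2)
      * X1r (zetaH p) r) =ᶠ[𝓝 q] F1 p := by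
    filter_upwards [isOpen_compl_singleton.mem_nhds hq] with r hr
    exact inner1_eq p hp1 hr
  have hev2 : (fun r => Real.sqrt ((X1r (zetaH p) r)^2 + (X2r (zetaH p) r)^2) ^ (p-2)
      * X2r (zetaH p) r) =ᶠ[𝓝 q] F2 p := by
    filter_upwards [isOpen_compl_singleton.mem_nhds hq] with r hr
    exact inner2_eq p hp1 hr
  simp only [DeltaPHr]
  rw [X1r_congr hev1, X2r_congr hev2]
  by_cases hρ : rho q = 0
  · simp only [rho] at hρ
    have h1 : q.1 = 0 := by
      have : q.1 ^ 2 = 0 := by nlinarith [sq_nonneg q.1, sq_nonneg q.2.1]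
      exact pow_eq_zero_iff two_ne_zero |>.1 this
    have h2 : q.2.1 = 0 := by
      have : q.2.1 ^ 2 = 0 := by nlinarith [sq_nonneg q.1, sq_nonneg q.2.1]
      exact pow_eq_zero_iff two_ne_zero |>.1 this
    have hz : q.2.2 ≠ 0 := by
      intro h0
      exact hq (Prod.ext h1 (Prod.ext h2 h0))
    rcases lt_trichotomy p 2 with hlt | heq | hgt
    · have n1 := notdiff_F1 hp1 hlt h1 h2 hz
      have n2 := notdiff_F2 hp1 hlt h1 h2 hz
      rw [X1r, X2r, fderiv_zero_of_not_differentiableAt n1,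
        fderiv_zero_of_not_differentiableAt n2]
      simp
    · subst heq
      exact div_axis_p2 hq h1 h2
    · have d1 : HasFDerivAt (F1 p) (0 : P3 →L[ℝ] ℝ) q :=
        hasFDerivAt_axis_zero p hgt h1 h2 hq Af abs_A_le
      have d2 : HasFDerivAt (F2 p) (0 : P3 →L[ℝ] ℝ) q :=
        hasFDerivAt_axis_zero p hgt h1 h2 hq Bf abs_B_le
      rw [X1r_eq d1, X2r_eq d2]
      simp
  · exact div_offaxis p hp1 hq hρ
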